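/- Let A be a unital C*-algebra, let I be a closed two-sided ideal of A, let (e_α) be a quasi-central approximate unit for I, and let S be a closed ℂ-linear subspace of A with 1 ∈ S and S closed under the star operation. Set J = S ∩ I, and assume that e_α·s ∈ S (hence e_α·s ∈ J) for every s ∈ S and every index α. Then for every self-adjoint s ∈ S the following are equivalent: (i) for every ε > 0 there exists k ∈ J with 0 ≤ ε·1 + s + k; (ii) for every ε > 0 there exists b ∈ I with 0 ≤ ε·1 + s + b. -/

import Mathlib

open Filter

lemma aux_le_smul_one {A : Type*} [CStarAlgebra A] [PartialOrder A] [StarOrderedRing A]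
    {x : A} (hx : IsSelfAdjoint x) {c : ℝ} (hc : ‖x‖ ≤ c) : x ≤ c • (1 : A) := by
  calc x ≤ algebraMap ℝ A ‖x‖ := hx.le_algebraMap_norm_self
    _ = ‖x‖ • (1 : A) := Algebra.algebraMap_eq_smul_one _
    _ ≤ c • (1 : A) := by
        rw [← sub_nonneg, ← sub_smul]
        exact smul_nonneg (by linarith) (by simpa using star_mul_self_nonneg (1 : A))

theorem stmt13 {A : Type*} [CStarAlgebra A] [PartialOrder A] [StarOrderedRing A]
    (I : TwoSidedIdeal A) (hI : IsClosed (I : Set A))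
    {ι : Type*} [Preorder ι] [Nonempty ι] [IsDirected ι (· ≤ ·)]
    (e : ι → A)
    (he_mem : ∀ α, e α ∈ I) (he_pos : ∀ α, 0 ≤ e α) (he_norm : ∀ α, ‖e α‖ ≤ 1)
    (he_unit : ∀ b ∈ I, Tendsto (fun α => ‖e α * b - b‖) atTop (nhds 0))
    (he_comm : ∀ a : A, Tendsto (fun α => ‖e α * a - a * e α‖) atTop (nhds 0))
    (S : Submodule ℂ A) (hS : IsClosed (S : Set A))
    (hone : (1 : A) ∈ S) (hstar : ∀ s ∈ S, star s ∈ S)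
    (hmul : ∀ s ∈ S, ∀ α, e α * s ∈ S) :
    ∀ s ∈ S, IsSelfAdjoint s →
      ((∀ ε : ℝ, 0 < ε → ∃ k ∈ (S : Set A) ∩ (I : Set A), 0 ≤ ε • (1 : A) + s + k) ↔
        (∀ ε : ℝ, 0 < ε → ∃ b ∈ I, 0 ≤ ε • (1 : A) + s + b)) := by
  intro s hsS hs
  constructor
  · intro h ε hε
    obtain ⟨k, ⟨hkS, hkI⟩, hk⟩ := h ε hε
    exact ⟨k, hkI, hk⟩
  · intro h ε hε
    obtain ⟨b, hbI, hb⟩ := h (ε / 2) (by linarith)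
    have hbsa : star b = b := by
      have h1 : IsSelfAdjoint ((ε / 2) • (1 : A) + s + b) := .of_nonneg hb
      have h2 : (ε / 2) • (1 : A) + s + star b = (ε / 2) • (1 : A) + s + b := by
        conv_rhs => rw [← h1]
        simp [star_add, star_smul, hs.star_eq]
      exact add_left_cancel h2
    have h8 : (0 : ℝ) < ε / 8 := by linarith
    obtain ⟨α, hα⟩ := ((he_unit b hbI).eventually (gt_mem_nhds h8)).exists
    set F : A := 1 - e α with hF
    have heα_sa : IsSelfAdjoint (e α) := .of_nonneg (he_pos α)
    have hFsa : IsSelfAdjoint F := by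
      rw [IsSelfAdjoint]; simp [hF, heα_sa.star_eq]
    have hFnorm : ‖F‖ ≤ 1 := by
      have h0F : (0 : A) ≤ F := by
        rw [hF, sub_nonneg]
        exact (aux_le_smul_one heα_sa (he_norm α)).trans_eq (one_smul ℝ 1)
      have hF1 : F ≤ 1 := by
        rw [hF, sub_le_iff_le_add]
        exact le_add_of_nonneg_right (he_pos α)
      have hone1 : ‖(1 : A)‖ ≤ 1 := by
        rcases subsingleton_or_nontrivial A with h | h
        · simp [Subsingleton.elim (1 : A) 0]
        · exact le_of_eq CStarRing.norm_one
      exact (CStarAlgebra.norm_le_norm_of_nonneg_of_le h0F hF1).trans hone1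
    refine ⟨F * s * F - s, ⟨?_, ?_⟩, ?_⟩
    · have h1 : e α * s ∈ S := hmul s hsS α
      have h2 : s * e α ∈ S := by
        have := hstar _ (hmul (star s) (hstar s hsS) α)
        simpa [star_mul, heα_sa.star_eq] using this
      have h3 : e α * (s * e α) ∈ S := hmul _ h2 α
      have heq : F * s * F - s = e α * (s * e α) - e α * s - s * e α := by
        simp only [hF]; noncomm_ring
      rw [heq]
      exact S.sub_mem (S.sub_mem h3 h1) h2
    · have h1 : e α * s ∈ I := I.mul_mem_right _ _ (he_mem α)
      have h2 : s * e α ∈ I := I.mul_mem_left _ _ (he_mem α)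
      have h3 : e α * (s * e α) ∈ I := I.mul_mem_left _ _ h2
      have heq : F * s * F - s = e α * (s * e α) - e α * s - s * e α := by
        simp only [hF]; noncomm_ring
      rw [heq]
      exact I.sub_mem (I.sub_mem h3 h1) h2
    · have hconj : 0 ≤ F * ((ε / 2) • (1 : A) + s + b) * F := by
        have := star_left_conjugate_nonneg hb F
        rwa [hFsa.star_eq] at this
      have hFF : F * F ≤ (1 : A) := by
        have hFFsa : IsSelfAdjoint (F * F) := by
          rw [IsSelfAdjoint, star_mul, hFsa.star_eq]
        have hn : ‖F * F‖ ≤ 1 := by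
          calc ‖F * F‖ ≤ ‖F‖ * ‖F‖ := norm_mul_le _ _
            _ ≤ 1 := by nlinarith [norm_nonneg F]
        simpa using aux_le_smul_one hFFsa hn
      have hFbF : F * b * F ≤ (ε / 2) • (1 : A) := by
        apply aux_le_smul_one
        · rw [IsSelfAdjoint]
          simp only [star_mul, hFsa.star_eq, hbsa, mul_assoc]
        · have hn1 : ‖F * b‖ < ε / 8 := by
            have : F * b = -(e α * b - b) := by simp [hF]; noncomm_ring
            rw [this, norm_neg]
            exact hα
          calc ‖F * b * F‖ ≤ ‖F * b‖ * ‖F‖ := norm_mul_le _ _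
            _ ≤ ε / 2 := by nlinarith [norm_nonneg (F * b), norm_nonneg F]
      have key : ε • (1 : A) + s + (F * s * F - s) =
          F * ((ε / 2) • (1 : A) + s + b) * F + (ε / 2) • ((1 : A) - F * F)
            + ((ε / 2) • (1 : A) - F * b * F) := by
        simp only [mul_add, add_mul, mul_smul_comm, smul_mul_assoc, mul_one, one_mul, smul_sub]
        module
      rw [key]
      exact add_nonneg (add_nonneg hconj (smul_nonneg (by linarith) (sub_nonneg.2 hFF)))
        (sub_nonneg.2 hFbF)
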